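/- In the ring ℂ(x)[∂] of differential operators over the field of rational functions with derivation d/dx, the operators L = ∂³ − (15/x²)∂ + 15/x³ + h and P4 = ∂⁴ − (20/x²)∂² + (40/x³)∂ commute, i.e. L·P4 = P4·L, for every complex constant h. -/

import Mathlib

open RatFunc

section Aux
open Polynomial

/-- The derivation `d/dx` on the differential field `ℂ(x)` of rational functions,
given by the quotient rule on the (coprime) numerator and denominator. -/
noncomputable def ratD (f : RatFunc ℂ) : RatFunc ℂ :=
  (algebraMap (Polynomial ℂ) (RatFunc ℂ) (Polynomial.derivative f.num)
      * algebraMap (Polynomial ℂ) (RatFunc ℂ) f.denom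
    - algebraMap (Polynomial ℂ) (RatFunc ℂ) f.num
      * algebraMap (Polynomial ℂ) (RatFunc ℂ) (Polynomial.derivative f.denom))
    / algebraMap (Polynomial ℂ) (RatFunc ℂ) f.denom ^ 2

theorem ratD_div (p q : Polynomial ℂ) (hq : q ≠ 0) :
    ratD (algebraMap _ _ p / algebraMap _ _ q)
      = algebraMap (Polynomial ℂ) (RatFunc ℂ) (derivative p * q - p * derivative q)
        / algebraMap (Polynomial ℂ) (RatFunc ℂ) (q ^ 2) := by
  have hb := (algebraMap (Polynomial ℂ) (RatFunc ℂ) p / algebraMap _ _ q).denom_ne_zero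
  have hn := RatFunc.num_div_denom (algebraMap (Polynomial ℂ) (RatFunc ℂ) p / algebraMap _ _ q)
  set a := (algebraMap (Polynomial ℂ) (RatFunc ℂ) p / algebraMap _ _ q).num with ha
  set b := (algebraMap (Polynomial ℂ) (RatFunc ℂ) p / algebraMap _ _ q).denom with hbdef
  have hqq : algebraMap (Polynomial ℂ) (RatFunc ℂ) q ≠ 0 := RatFunc.algebraMap_ne_zero hq
  have hbb : algebraMap (Polynomial ℂ) (RatFunc ℂ) b ≠ 0 := RatFunc.algebraMap_ne_zero hb
  rw [div_eq_div_iff hbb hqq] at hn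
  have key : a * q = p * b := by
    apply RatFunc.algebraMap_injective ℂ
    rw [map_mul, map_mul]; exact hn
  have dkey : derivative a * q + a * derivative q = derivative p * b + p * derivative b := by
    have := congrArg derivative key
    simpa [derivative_mul] using this
  have P : (derivative a * b - a * derivative b) * q ^ 2
      = (derivative p * q - p * derivative q) * b ^ 2 := by
    linear_combination (q * b) * dkey - (derivative b * q + derivative q * b) * key
  rw [ratD, ← ha, ← hbdef, div_eq_div_iff (pow_ne_zero 2 hbb) (RatFunc.algebraMap_ne_zero (pow_ne_zero 2 hq))]
  calc (algebraMap (Polynomial ℂ) (RatFunc ℂ) (derivative a) * algebraMap _ _ b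
        - algebraMap _ _ a * algebraMap _ _ (derivative b)) * algebraMap _ _ (q ^ 2)
      = algebraMap (Polynomial ℂ) (RatFunc ℂ) ((derivative a * b - a * derivative b) * q ^ 2) := by
        push_cast; ring
    _ = algebraMap (Polynomial ℂ) (RatFunc ℂ) ((derivative p * q - p * derivative q) * b ^ 2) := by
        rw [P]
    _ = _ := by push_cast; ring

theorem ratD_eq (f : RatFunc ℂ) :
    ratD f = algebraMap (Polynomial ℂ) (RatFunc ℂ)
        (derivative f.num * f.denom - f.num * derivative f.denom)
      / algebraMap (Polynomial ℂ) (RatFunc ℂ) (f.denom ^ 2) := by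
  conv_lhs => rw [← RatFunc.num_div_denom f]
  rw [ratD_div _ _ f.denom_ne_zero]

theorem ratD_add (f g : RatFunc ℂ) : ratD (f + g) = ratD f + ratD g := by
  have hb : algebraMap (Polynomial ℂ) (RatFunc ℂ) f.denom ≠ 0 :=
    RatFunc.algebraMap_ne_zero f.denom_ne_zero
  have hd : algebraMap (Polynomial ℂ) (RatFunc ℂ) g.denom ≠ 0 :=
    RatFunc.algebraMap_ne_zero g.denom_ne_zero
  have hfg : f + g = algebraMap _ _ (f.num * g.denom + f.denom * g.num)
      / algebraMap (Polynomial ℂ) (RatFunc ℂ) (f.denom * g.denom) := by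
    conv_lhs => rw [← RatFunc.num_div_denom f, ← RatFunc.num_div_denom g]
    rw [div_add_div _ _ hb hd, map_mul, map_add, map_mul, map_mul]
  rw [hfg, ratD_div _ _ (mul_ne_zero f.denom_ne_zero g.denom_ne_zero), ratD_eq f, ratD_eq g]
  simp only [derivative_add, derivative_mul, map_add, map_mul, map_sub, map_pow]
  field_simp
  ring

theorem ratD_mul (f g : RatFunc ℂ) : ratD (f * g) = ratD f * g + f * ratD g := by
  obtain ⟨a, b, hb0, rfl⟩ : ∃ a b, b ≠ 0 ∧ f = algebraMap (Polynomial ℂ) (RatFunc ℂ) a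
      / algebraMap (Polynomial ℂ) (RatFunc ℂ) b :=
    ⟨f.num, f.denom, f.denom_ne_zero, (RatFunc.num_div_denom f).symm⟩
  obtain ⟨c, d, hd0, rfl⟩ : ∃ c d, d ≠ 0 ∧ g = algebraMap (Polynomial ℂ) (RatFunc ℂ) c
      / algebraMap (Polynomial ℂ) (RatFunc ℂ) d :=
    ⟨g.num, g.denom, g.denom_ne_zero, (RatFunc.num_div_denom g).symm⟩
  have hb : algebraMap (Polynomial ℂ) (RatFunc ℂ) b ≠ 0 := RatFunc.algebraMap_ne_zero hb0
  have hd : algebraMap (Polynomial ℂ) (RatFunc ℂ) d ≠ 0 := RatFunc.algebraMap_ne_zero hd0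
  rw [div_mul_div_comm, ← map_mul, ← map_mul,
    ratD_div _ _ (mul_ne_zero hb0 hd0), ratD_div _ _ hb0, ratD_div _ _ hd0]
  simp only [derivative_add, derivative_mul, map_add, map_mul, map_sub, map_pow]
  field_simp
  ring

theorem ratD_C (c : ℂ) : ratD (RatFunc.C c) = 0 := by
  rw [← RatFunc.algebraMap_C c]
  have h := ratD_div (Polynomial.C c) 1 one_ne_zero
  simpa using h

theorem ratD_neg (f : RatFunc ℂ) : ratD (-f) = -ratD f := by
  have h0 : ratD (0 : RatFunc ℂ) = 0 := by simpa using ratD_C 0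
  have := ratD_add f (-f)
  rw [add_neg_cancel, h0] at this
  linear_combination -this

theorem ratD_sub (f g : RatFunc ℂ) : ratD (f - g) = ratD f - ratD g := by
  rw [sub_eq_add_neg, ratD_add, ratD_neg, sub_eq_add_neg]

end Aux


theorem ratD_C_div_X_pow (c : ℂ) (k : ℕ) :
    ratD (RatFunc.C c / X ^ (k + 1)) = -(RatFunc.C ((k + 1 : ℂ) * c) / X ^ (k + 2)) := by
  rw [← RatFunc.algebraMap_C c, ← RatFunc.algebraMap_X, ← map_pow,
    ratD_div _ _ (pow_ne_zero _ Polynomial.X_ne_zero)]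
  have hX : (X : RatFunc ℂ) ≠ 0 := RatFunc.X_ne_zero
  simp only [Polynomial.derivative_C, Polynomial.derivative_X_pow, zero_mul, zero_sub, map_neg,
    map_mul, map_pow, RatFunc.algebraMap_X, RatFunc.algebraMap_C, map_natCast,
    Nat.add_sub_cancel]
  field_simp
  simp only [map_add, map_one, map_natCast, Nat.cast_add, Nat.cast_one]
  ring

@[simp] theorem ratD_15_2 : ratD ((15 : RatFunc ℂ) / X ^ 2) = -((30 : RatFunc ℂ) / X ^ 3) := by
  rw [show (15 : RatFunc ℂ) = RatFunc.C 15 from (map_ofNat _ _).symm, ratD_C_div_X_pow 15 1]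
  norm_num [map_ofNat]

@[simp] theorem ratD_15_3 : ratD ((15 : RatFunc ℂ) / X ^ 3) = -((45 : RatFunc ℂ) / X ^ 4) := by
  rw [show (15 : RatFunc ℂ) = RatFunc.C 15 from (map_ofNat _ _).symm, ratD_C_div_X_pow 15 2]
  norm_num [map_ofNat]

@[simp] theorem ratD_30_3 : ratD ((30 : RatFunc ℂ) / X ^ 3) = -((90 : RatFunc ℂ) / X ^ 4) := by
  rw [show (30 : RatFunc ℂ) = RatFunc.C 30 from (map_ofNat _ _).symm, ratD_C_div_X_pow 30 2]
  norm_num [map_ofNat]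

@[simp] theorem ratD_45_4 : ratD ((45 : RatFunc ℂ) / X ^ 4) = -((180 : RatFunc ℂ) / X ^ 5) := by
  rw [show (45 : RatFunc ℂ) = RatFunc.C 45 from (map_ofNat _ _).symm, ratD_C_div_X_pow 45 3]
  norm_num [map_ofNat]

@[simp] theorem ratD_90_4 : ratD ((90 : RatFunc ℂ) / X ^ 4) = -((360 : RatFunc ℂ) / X ^ 5) := by
  rw [show (90 : RatFunc ℂ) = RatFunc.C 90 from (map_ofNat _ _).symm, ratD_C_div_X_pow 90 3]
  norm_num [map_ofNat]

@[simp] theorem ratD_180_5 : ratD ((180 : RatFunc ℂ) / X ^ 5) = -((900 : RatFunc ℂ) / X ^ 6) := by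
  rw [show (180 : RatFunc ℂ) = RatFunc.C 180 from (map_ofNat _ _).symm, ratD_C_div_X_pow 180 4]
  norm_num [map_ofNat]

@[simp] theorem ratD_360_5 : ratD ((360 : RatFunc ℂ) / X ^ 5) = -((1800 : RatFunc ℂ) / X ^ 6) := by
  rw [show (360 : RatFunc ℂ) = RatFunc.C 360 from (map_ofNat _ _).symm, ratD_C_div_X_pow 360 4]
  norm_num [map_ofNat]

@[simp] theorem ratD_900_6 : ratD ((900 : RatFunc ℂ) / X ^ 6) = -((5400 : RatFunc ℂ) / X ^ 7) := by
  rw [show (900 : RatFunc ℂ) = RatFunc.C 900 from (map_ofNat _ _).symm, ratD_C_div_X_pow 900 5]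
  norm_num [map_ofNat]

@[simp] theorem ratD_20_2 : ratD ((20 : RatFunc ℂ) / X ^ 2) = -((40 : RatFunc ℂ) / X ^ 3) := by
  rw [show (20 : RatFunc ℂ) = RatFunc.C 20 from (map_ofNat _ _).symm, ratD_C_div_X_pow 20 1]
  norm_num [map_ofNat]

@[simp] theorem ratD_40_3 : ratD ((40 : RatFunc ℂ) / X ^ 3) = -((120 : RatFunc ℂ) / X ^ 4) := by
  rw [show (40 : RatFunc ℂ) = RatFunc.C 40 from (map_ofNat _ _).symm, ratD_C_div_X_pow 40 2]
  norm_num [map_ofNat]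

@[simp] theorem ratD_120_4 : ratD ((120 : RatFunc ℂ) / X ^ 4) = -((480 : RatFunc ℂ) / X ^ 5) := by
  rw [show (120 : RatFunc ℂ) = RatFunc.C 120 from (map_ofNat _ _).symm, ratD_C_div_X_pow 120 3]
  norm_num [map_ofNat]

@[simp] theorem ratD_480_5 : ratD ((480 : RatFunc ℂ) / X ^ 5) = -((2400 : RatFunc ℂ) / X ^ 6) := by
  rw [show (480 : RatFunc ℂ) = RatFunc.C 480 from (map_ofNat _ _).symm, ratD_C_div_X_pow 480 4]
  norm_num [map_ofNat]

/-- The operator `L = ∂³ - (15/x²)∂ + 15/x³ + h`, acting on `ℂ(x)`. -/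
noncomputable def opL (h : ℂ) (f : RatFunc ℂ) : RatFunc ℂ :=
  ratD^[3] f - 15 / X ^ 2 * ratD f + (15 / X ^ 3 + RatFunc.C h) * f

/-- The operator `P₄ = ∂⁴ - (20/x²)∂² + (40/x³)∂`, acting on `ℂ(x)`. -/
noncomputable def opP4 (f : RatFunc ℂ) : RatFunc ℂ :=
  ratD^[4] f - 20 / X ^ 2 * ratD^[2] f + 40 / X ^ 3 * ratD f

set_option maxHeartbeats 2000000 in
/-- `L` and `P₄` commute in `ℂ(x)[∂]` (the ring of differential operators over `ℂ(x)`
acts faithfully on `ℂ(x)`, so this is the equality `L·P₄ = P₄·L` of compositions). -/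
theorem stmt2 (h : ℂ) : ∀ f : RatFunc ℂ, opL h (opP4 f) = opP4 (opL h f) := by
  intro f
  have hX : (X : RatFunc ℂ) ≠ 0 := RatFunc.X_ne_zero
  simp only [opL, opP4, Function.iterate_succ_apply', Function.iterate_zero_apply]
  simp only [ratD_sub, ratD_add, ratD_mul, ratD_neg, ratD_C,
    ratD_15_2, ratD_15_3, ratD_30_3, ratD_45_4, ratD_90_4, ratD_180_5, ratD_360_5, ratD_900_6, ratD_20_2, ratD_40_3, ratD_120_4, ratD_480_5,
    zero_mul, mul_zero, add_zero, zero_add]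
  ring
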